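/- Let {S(t) : t ≥ 0} be an asymptotically closed semigroup on a complete metric space (V,d), let T > 0 and N ∈ ℕ. Then the semigroup has a T-discrete exponential attractor in V if and only if it has a (T/N)-discrete exponential attractor in V. -/

import Mathlib

open Filter Metric Set Topology Bornology
open scoped ENNReal

section Defs

variable {V : Type*} [MetricSpace V]

/-- A semigroup (semiflow) of maps `S t : V → V`, `t ∈ [0,∞)`. -/
def IsSemiflow (S : ℝ → V → V) : Prop :=
  (∀ x : V, S 0 x = x) ∧ ∀ t s : ℝ, 0 ≤ t → 0 ≤ s → ∀ x : V, S t (S s x) = S (t + s) x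

/-- One-sided Hausdorff distance `dist^V(G,A) = sup_{x∈G} inf_{y∈A} d(x,y)` (in `ℝ≥0∞`). -/
noncomputable def attrDist (G A : Set V) : ℝ≥0∞ :=
  ⨆ x ∈ G, EMetric.infEdist x A

/-- The set `A` attracts all bounded subsets of `V`. -/
def AttractsSet (S : ℝ → V → V) (A : Set V) : Prop :=
  ∀ G : Set V, IsBounded G → Tendsto (fun t : ℝ => attrDist (S t '' G) A) atTop (𝓝 0)

/-- A global attractor: nonempty, compact, invariant, attracts all bounded sets. -/
def IsGlobalAttr (S : ℝ → V → V) (A : Set V) : Prop :=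
  A.Nonempty ∧ IsCompact A ∧ (∀ t : ℝ, 0 ≤ t → S t '' A = A) ∧ AttractsSet S A

/-- `B` is an absorbing set for the semigroup. -/
def IsAbsorbingSet (S : ℝ → V → V) (B : Set V) : Prop :=
  ∀ G : Set V, IsBounded G → ∃ tG : ℝ, 0 ≤ tG ∧ ∀ t : ℝ, tG ≤ t → S t '' G ⊆ B

/-- The semigroup is asymptotically closed. -/
def AsympClosed (S : ℝ → V → V) : Prop :=
  ∀ t : ℝ, 0 ≤ t → ∀ tk : ℕ → ℝ, (∀ k, 0 ≤ tk k) → Tendsto tk atTop atTop →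
    ∀ xk : ℕ → V, IsBounded (range xk) → ∀ x y : V,
      Tendsto (fun k => S (tk k) (xk k)) atTop (𝓝 x) →
      Tendsto (fun k => S (t + tk k) (xk k)) atTop (𝓝 y) → S t x = y

/-- The ω-limit set `Λ^V(G) = ⋂_{s ≥ 0} cl_V ⋃_{t ≥ s} S(t)G`. -/
def omegaLim (S : ℝ → V → V) (G : Set V) : Set V :=
  ⋂ (s : ℝ) (_ : 0 ≤ s), closure (⋃ (t : ℝ) (_ : s ≤ t), S t '' G)

/-- `N^V(G,ε)`: minimal number of open `ε`-balls centered in `G` needed to cover `G`. -/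
noncomputable def coverN (G : Set V) (ε : ℝ) : ℝ≥0∞ :=
  ⨅ (F : Finset V) (_ : ↑F ⊆ G) (_ : G ⊆ ⋃ x ∈ F, ball x ε), (F.card : ℝ≥0∞)

open Classical in
/-- Fractal (box-counting) dimension `limsup_{ε→0⁺} log N^V(M,ε) / log (1/ε)`. -/
noncomputable def fracDim (M : Set V) : ℝ≥0∞ :=
  limsup (fun ε : ℝ =>
    if coverN M ε = ⊤ then (⊤ : ℝ≥0∞)
    else ENNReal.ofReal (Real.log (coverN M ε).toReal / Real.log (1 / ε))) (𝓝[>] (0 : ℝ))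

/-- `M` attracts all bounded sets at exponential rate `ξ`. -/
def ExpAttractsAt (S : ℝ → V → V) (M : Set V) (ξ : ℝ) : Prop :=
  ∀ G : Set V, IsBounded G →
    Tendsto (fun t : ℝ => ENNReal.ofReal (Real.exp (ξ * t)) * attrDist (S t '' G) M)
      atTop (𝓝 0)

/-- A `T`-discrete exponential attractor. -/
def IsDiscExpAttr (S : ℝ → V → V) (T : ℝ) (M : Set V) : Prop :=
  M.Nonempty ∧ IsCompact M ∧ S T '' M ⊆ M ∧ fracDim M ≠ ⊤ ∧
    ∃ ξ : ℝ, 0 < ξ ∧ ExpAttractsAt S M ξ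

/-- The covering condition `N^V(S(kT)B, a·qᵏ) ≤ b·hᵏ` for `k ≥ k₀`. -/
def CoveringCond (S : ℝ → V → V) (T : ℝ) (B : Set V) (k₀ : ℕ) (a b q h : ℝ) : Prop :=
  ∀ k : ℕ, k₀ ≤ k →
    coverN (S (k * T) '' B) (a * q ^ k) ≤ ENNReal.ofReal (b * h ^ k)

end Defs

section Statement4

variable {V : Type*} [MetricSpace V]

lemma le_attrDist {G A : Set V} {x : V} (hx : x ∈ G) : EMetric.infEdist x A ≤ attrDist G A :=
  le_iSup₂ (f := fun x (_ : x ∈ G) => EMetric.infEdist x A) x hx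

lemma attrDist_le_iff {G A : Set V} {c : ℝ≥0∞} :
    attrDist G A ≤ c ↔ ∀ x ∈ G, EMetric.infEdist x A ≤ c := iSup₂_le_iff

lemma coverN_le_card {G : Set V} {ε : ℝ} {F : Finset V} (h1 : ↑F ⊆ G)
    (h2 : G ⊆ ⋃ x ∈ F, ball x ε) : coverN G ε ≤ F.card := by
  exact iInf₂_le_of_le F h1 (iInf_le_of_le h2 le_rfl)

lemma coverN_ne_top {G : Set V} (hG : IsCompact G) {ε : ℝ} (hε : 0 < ε) :
    coverN G ε ≠ ⊤ := by
  obtain ⟨t, ht1, ht2⟩ := hG.elim_nhds_subcover (fun x => ball x ε)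
    (fun x _ => ball_mem_nhds x hε)
  exact ne_top_of_le_ne_top (ENNReal.natCast_ne_top _) (coverN_le_card (by exact ht1) ht2)

lemma one_le_coverN {G : Set V} (hG : G.Nonempty) {ε : ℝ} : 1 ≤ coverN G ε := by
  refine le_iInf₂ fun F hF => le_iInf fun hcov => ?_
  obtain ⟨x, hx⟩ := hG
  obtain ⟨c, hc, -⟩ := mem_iUnion₂.1 (hcov hx)
  exact_mod_cast Nat.one_le_iff_ne_zero.2 (Finset.card_ne_zero_of_mem hc)

lemma coverN_lt_extract {G : Set V} {ε : ℝ} {c : ℝ≥0∞} (h : coverN G ε < c) :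
    ∃ F : Finset V, ↑F ⊆ G ∧ (G ⊆ ⋃ x ∈ F, ball x ε) ∧ (F.card : ℝ≥0∞) < c := by
  simp only [coverN, iInf_lt_iff] at h
  obtain ⟨F, h1, h2, h3⟩ := h
  exact ⟨F, h1, h2, h3⟩

/-- Recentering: a cover of `G` by `r`-balls with arbitrary centers yields a cover by
`2r`-balls with centers in `G`, with no more balls. -/
lemma recenter {G : Set V} {F : Finset V} {r : ℝ} (hr : 0 < r)
    (hcov : G ⊆ ⋃ c ∈ F, ball c r) :
    ∃ F' : Finset V, ↑F' ⊆ G ∧ F'.card ≤ F.card ∧ G ⊆ ⋃ c ∈ F', ball c (2 * r) := by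
  classical
  rcases G.eq_empty_or_nonempty with rfl | ⟨g₀, hg₀⟩
  · exact ⟨∅, by simp, by simp, by simp⟩
  · set g : V → V := fun c => if h : (G ∩ ball c r).Nonempty then h.choose else g₀ with hg
    refine ⟨F.image g, ?_, Finset.card_image_le, ?_⟩
    · intro x hx
      simp only [Finset.coe_image, Set.mem_image] at hx
      obtain ⟨c, -, rfl⟩ := hx
      by_cases h : (G ∩ ball c r).Nonempty
      · simpa [hg, h] using h.choose_spec.1
      · simpa [hg, h] using hg₀
    · intro x hx
      obtain ⟨c, hc, hxc⟩ := mem_iUnion₂.1 (hcov hx)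
      have hne : (G ∩ ball c r).Nonempty := ⟨x, hx, hxc⟩
      have hgc := hne.choose_spec
      refine mem_iUnion₂.2 ⟨g c, Finset.mem_image_of_mem g hc, ?_⟩
      have h1 : dist x (g c) ≤ dist x c + dist c (g c) := dist_triangle _ _ _
      have h2 : dist c (g c) < r := by
        rw [hg]; simp only [hne, dif_pos]
        rw [dist_comm]; exact mem_ball.1 hgc.2
      have : dist x (g c) < r + r := by
        calc dist x (g c) ≤ dist x c + dist c (g c) := h1
        _ < r + r := add_lt_add (mem_ball.1 hxc) h2
      simpa [two_mul] using this


lemma near_point {M₀ : Set V} {x : V} {r : ℝ} (hr : 0 < r)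
    (h : EMetric.infEdist x M₀ ≤ ENNReal.ofReal r) : ∃ m ∈ M₀, dist x m < 2 * r := by
  have h2 : EMetric.infEdist x M₀ < ENNReal.ofReal (2 * r) := by
    refine lt_of_le_of_lt h ?_
    exact ENNReal.ofReal_lt_ofReal_iff_of_nonneg hr.le |>.2 (by linarith)
  obtain ⟨m, hm, hd⟩ := EMetric.infEdist_lt_iff.1 h2
  exact ⟨m, hm, edist_lt_ofReal.1 hd⟩

/-- Extract a quantitative cover-number bound at all small scales from `fracDim M₀ ≠ ⊤`. -/
lemma dim_net (M₀ : Set V) (h1 : M₀.Nonempty) (h2 : IsCompact M₀) (h4 : fracDim M₀ ≠ ⊤) :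
    ∃ d : ℝ, 0 ≤ d ∧ ∃ ε₀ : ℝ, 0 < ε₀ ∧ ε₀ ≤ 1 ∧ ∀ ε : ℝ, 0 < ε → ε < ε₀ →
      coverN M₀ ε ≤ ENNReal.ofReal (Real.exp (d * Real.log (1 / ε))) := by
  classical
  set c' : ℝ≥0∞ := fracDim M₀ + 1 with hc'
  have hc'top : c' ≠ ⊤ := by
    simp [hc', ENNReal.add_eq_top, h4]
  have hlt : fracDim M₀ < c' := ENNReal.lt_add_right h4 one_ne_zero
  have hev : ∀ᶠ ε in 𝓝[>] (0 : ℝ),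
      (if coverN M₀ ε = ⊤ then (⊤ : ℝ≥0∞)
        else ENNReal.ofReal (Real.log (coverN M₀ ε).toReal / Real.log (1 / ε))) < c' :=
    Filter.eventually_lt_of_limsup_lt hlt
  obtain ⟨s, hs, hsub⟩ := mem_nhdsWithin_iff_exists_mem_nhds_inter.1 hev
  obtain ⟨ε₁, hε₁, hball⟩ := Metric.mem_nhds_iff.1 hs
  refine ⟨c'.toReal, ENNReal.toReal_nonneg, min ε₁ 1, by positivity, min_le_right _ _,
    fun ε hε hεlt => ?_⟩
  have hεlt1 : ε < 1 := lt_of_lt_of_le hεlt (min_le_right _ _)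
  have hεlt2 : ε < ε₁ := lt_of_lt_of_le hεlt (min_le_left _ _)
  have hmem : ε ∈ s ∩ Ioi (0:ℝ) := ⟨hball (by simpa [abs_of_pos hε] using hεlt2), hε⟩
  have hvlt := hsub hmem
  have hNtop : coverN M₀ ε ≠ ⊤ := by
    obtain ⟨t, ht1, ht2⟩ := h2.elim_nhds_subcover (fun x => ball x ε)
      (fun x _ => ball_mem_nhds x hε)
    exact ne_top_of_le_ne_top (ENNReal.natCast_ne_top t.card)
      (iInf₂_le_of_le t (by exact ht1) (iInf_le_of_le ht2 le_rfl))
  simp only [Set.mem_setOf_eq, if_neg hNtop] at hvlt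
  set Nr := (coverN M₀ ε).toReal with hNr
  have hN1 : (1:ℝ≥0∞) ≤ coverN M₀ ε := by
    refine le_iInf₂ fun F hF => le_iInf fun hcov => ?_
    obtain ⟨x, hx⟩ := h1
    obtain ⟨c, hc, -⟩ := mem_iUnion₂.1 (hcov hx)
    exact_mod_cast Nat.one_le_iff_ne_zero.2 (Finset.card_ne_zero_of_mem hc)
  have hNr1 : 1 ≤ Nr := by
    rw [hNr]
    simpa using ENNReal.toReal_mono hNtop hN1
  have hlog : 0 < Real.log (1 / ε) := Real.log_pos (by rw [lt_div_iff₀ hε]; linarith)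
  have hq : Real.log Nr / Real.log (1 / ε) ≤ c'.toReal :=
    (ENNReal.ofReal_le_iff_le_toReal hc'top).1 hvlt.le
  have hlogN : Real.log Nr ≤ c'.toReal * Real.log (1 / ε) := by
    rwa [div_le_iff₀ hlog] at hq
  have hNrle : Nr ≤ Real.exp (c'.toReal * Real.log (1 / ε)) := by
    calc Nr = Real.exp (Real.log Nr) := (Real.exp_log (by linarith)).symm
    _ ≤ _ := Real.exp_le_exp.2 hlogN
  calc coverN M₀ ε = ENNReal.ofReal Nr := (ENNReal.ofReal_toReal hNtop).symm
  _ ≤ _ := ENNReal.ofReal_le_ofReal hNrle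


lemma net_of_near {M₀ G : Set V} {r : ℝ} (hr : 0 < r) (hnear : attrDist G M₀ ≤ ENNReal.ofReal r)
    {F : Finset V} (hFcov : M₀ ⊆ ⋃ c ∈ F, ball c r) :
    ∃ W : Finset V, ↑W ⊆ G ∧ W.card ≤ F.card ∧ G ⊆ ⋃ w ∈ W, ball w (6 * r) := by
  have hcov3 : G ⊆ ⋃ c ∈ F, ball c (3 * r) := by
    intro x hx
    obtain ⟨m, hm, hdm⟩ := near_point hr (le_trans (le_attrDist hx) hnear)
    obtain ⟨c, hc, hmc⟩ := mem_iUnion₂.1 (hFcov hm)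
    refine mem_iUnion₂.2 ⟨c, hc, mem_ball.2 ?_⟩
    have ht := dist_triangle x m c
    have h2 : dist m c < r := mem_ball.1 hmc
    linarith
  obtain ⟨W, hW1, hW2, hW3⟩ := recenter (by positivity : (0:ℝ) < 3 * r) hcov3
  exact ⟨W, hW1, hW2, by rwa [show 2 * (3 * r) = 6 * r by ring] at hW3⟩

set_option maxHeartbeats 2000000 in
lemma exists_attr [CompleteSpace V]
    (S : ℝ → V → V) (hS : IsSemiflow S) (hac : AsympClosed S)
    (M₀ : Set V) (h1 : M₀.Nonempty) (h2 : IsCompact M₀) (h4 : fracDim M₀ ≠ ⊤)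
    (ξ : ℝ) (hξ : 0 < ξ) (h5 : ExpAttractsAt S M₀ ξ)
    (τ : ℝ) (hτ : 0 < τ) : ∃ M : Set V, IsDiscExpAttr S τ M := by
  classical
  -- the bounded absorbing set B₁
  set B₁ : Set V := Metric.cthickening 1 M₀ with hB₁def
  have hM₀B₁ : M₀ ⊆ B₁ := Metric.self_subset_cthickening _
  have hB₁ne : B₁.Nonempty := h1.mono hM₀B₁
  have hB₁b : IsBounded B₁ := h2.isBounded.cthickening
  have hinfB₁ : ∀ x : V, EMetric.infEdist x M₀ ≤ 1 → x ∈ B₁ := by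
    intro x hx
    rw [hB₁def, Metric.mem_cthickening_iff]
    simpa [EMetric.infEdist] using hx
  -- B₁ absorbs every bounded set
  have habs : ∀ G : Set V, IsBounded G → ∃ s₀ : ℝ, 0 ≤ s₀ ∧ ∀ s, s₀ ≤ s → S s '' G ⊆ B₁ := by
    intro G hG
    have hev : ∀ᶠ t in (atTop : Filter ℝ),
        ENNReal.ofReal (Real.exp (ξ * t)) * attrDist (S t '' G) M₀ < 1 :=
      (h5 G hG).eventually_lt_const (by norm_num)
    obtain ⟨s₁, hs₁⟩ := eventually_atTop.1 (hev.and (eventually_ge_atTop (0:ℝ)))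
    refine ⟨max s₁ 0, le_max_right _ _, fun s hs => ?_⟩
    obtain ⟨hlt, hs0⟩ := hs₁ s (le_trans (le_max_left _ _) hs)
    intro x hx
    apply hinfB₁
    have hone : (1:ℝ≥0∞) ≤ ENNReal.ofReal (Real.exp (ξ * s)) :=
      ENNReal.one_le_ofReal.2 (Real.one_le_exp (mul_nonneg hξ.le hs0))
    calc EMetric.infEdist x M₀ ≤ attrDist (S s '' G) M₀ := le_attrDist hx
    _ = 1 * attrDist (S s '' G) M₀ := (one_mul _).symm
    _ ≤ ENNReal.ofReal (Real.exp (ξ * s)) * attrDist (S s '' G) M₀ := mul_le_mul_left hone _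
    _ ≤ 1 := hlt.le
  -- exponential decay of images of B₁ towards M₀
  obtain ⟨t₁, ht₁0, hdec⟩ : ∃ t₁ : ℝ, 0 ≤ t₁ ∧ ∀ t, t₁ ≤ t →
      attrDist (S t '' B₁) M₀ ≤ ENNReal.ofReal (Real.exp (-(ξ * t))) := by
    have hev : ∀ᶠ t in (atTop : Filter ℝ),
        ENNReal.ofReal (Real.exp (ξ * t)) * attrDist (S t '' B₁) M₀ < 1 :=
      (h5 B₁ hB₁b).eventually_lt_const (by norm_num)
    obtain ⟨s₁, hs₁⟩ := eventually_atTop.1 hev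
    refine ⟨max s₁ 0, le_max_right _ _, fun t ht => ?_⟩
    have hlt := hs₁ t (le_trans (le_max_left _ _) ht)
    have hexp : (0:ℝ) < Real.exp (ξ * t) := Real.exp_pos _
    rw [show Real.exp (-(ξ * t)) = (Real.exp (ξ * t))⁻¹ from Real.exp_neg _,
      ENNReal.ofReal_inv_of_pos hexp]
    exact ENNReal.le_inv_iff_mul_le.2 (by rw [mul_comm]; exact hlt.le)
  obtain ⟨d, hd0, ε₀, hε₀, hε₀1, hnet⟩ := dim_net M₀ h1 h2 h4
  -- scales
  set r : ℕ → ℝ := fun k => Real.exp (-(ξ * (k * τ))) with hrdef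
  have hrpos : ∀ k, 0 < r k := fun k => Real.exp_pos _
  have hrmono : ∀ {k l : ℕ}, k ≤ l → r l ≤ r k := by
    intro k l h
    apply Real.exp_le_exp.2
    have h1 : (k:ℝ) ≤ l := Nat.cast_le.2 h
    have h2 : (k:ℝ) * τ ≤ l * τ := mul_le_mul_of_nonneg_right h1 hτ.le
    have h3 : ξ * ((k:ℝ) * τ) ≤ ξ * (l * τ) := mul_le_mul_of_nonneg_left h2 hξ.le
    linarith
  have hr0 : Tendsto r atTop (𝓝 0) := by
    have he : r = fun k : ℕ => (Real.exp (-(ξ * τ))) ^ k := by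
      funext k
      rw [hrdef, ← Real.exp_nat_mul]
      ring_nf
    rw [he]
    exact tendsto_pow_atTop_nhds_zero_of_lt_one (Real.exp_pos _).le
      (Real.exp_lt_one_iff.2 (by nlinarith))
  -- choice of K
  obtain ⟨K, hKt₁, hKε₀⟩ : ∃ K : ℕ, t₁ ≤ K * τ ∧ ∀ k, K ≤ k → r k < ε₀ := by
    obtain ⟨K₁, hK₁⟩ := (hr0.eventually_lt_const hε₀).exists_forall_of_atTop
    obtain ⟨K₂, hK₂⟩ := exists_nat_ge (t₁ / τ)
    refine ⟨max K₁ K₂, ?_, fun k hk => hK₁ k (le_trans (le_max_left _ _) hk)⟩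
    rw [div_le_iff₀ hτ] at hK₂
    calc t₁ ≤ K₂ * τ := hK₂
    _ ≤ max K₁ K₂ * τ := by
        have : (K₂:ℝ) ≤ (max K₁ K₂ : ℕ) := Nat.cast_le.2 (le_max_right _ _)
        nlinarith
  have hKt : ∀ k : ℕ, K ≤ k → t₁ ≤ k * τ := by
    intro k hk
    calc t₁ ≤ K * τ := hKt₁
    _ ≤ k * τ := by have : (K:ℝ) ≤ k := Nat.cast_le.2 hk; nlinarith
  -- the image sets and their distance to M₀
  have himg : ∀ k : ℕ, K ≤ k → attrDist (S ((k:ℝ) * τ) '' B₁) M₀ ≤ ENNReal.ofReal (r k) :=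
    fun k hk => hdec _ (hKt k hk)
  -- cardinal bound function
  set Q : ℕ → ℝ := fun k => Real.exp (d * (ξ * (k * τ))) + 1 with hQdef
  have hQ1 : ∀ k, 1 ≤ Q k := fun k => by
    have := Real.exp_pos (d * (ξ * (k * τ))); simp [hQdef]; linarith
  have hQmono : ∀ {k l : ℕ}, k ≤ l → Q k ≤ Q l := by
    intro k l h
    have h1 : (k:ℝ) ≤ l := Nat.cast_le.2 h
    have h2 : (k:ℝ) * τ ≤ l * τ := mul_le_mul_of_nonneg_right h1 hτ.le
    have h3 : ξ * ((k:ℝ) * τ) ≤ ξ * ((l:ℝ) * τ) := mul_le_mul_of_nonneg_left h2 hξ.le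
    have : d * (ξ * ((k:ℝ) * τ)) ≤ d * (ξ * ((l:ℝ) * τ)) := mul_le_mul_of_nonneg_left h3 hd0
    simp only [hQdef, add_le_add_iff_right]
    exact Real.exp_le_exp.2 this
  -- the nets W j at time (K+j)τ
  have hWex : ∀ j : ℕ, ∃ Wj : Finset V, ↑Wj ⊆ S (((K+j:ℕ):ℝ) * τ) '' B₁ ∧
      (S (((K+j:ℕ):ℝ) * τ) '' B₁ ⊆ ⋃ w ∈ Wj, ball w (6 * r (K+j))) ∧
      ((Wj.card : ℝ) ≤ Q (K+j)) := by
    intro j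
    set k := K + j with hk
    have hkK : K ≤ k := Nat.le_add_right _ _
    have h1r : 1 / r k = Real.exp (ξ * (k * τ)) := by
      rw [hrdef]; simp [Real.exp_neg, one_div]
    have hlog : Real.log (1 / r k) = ξ * (k * τ) := by rw [h1r, Real.log_exp]
    have hcN : coverN M₀ (r k) ≤ ENNReal.ofReal (Real.exp (d * Real.log (1 / r k))) :=
      hnet (r k) (hrpos k) (hKε₀ k hkK)
    have hcN' : coverN M₀ (r k) < ENNReal.ofReal (Q k) := by
      refine lt_of_le_of_lt hcN ((ENNReal.ofReal_lt_ofReal_iff ?_).2 ?_)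
      · have := Real.exp_pos (d * (ξ * (k * τ))); simp only [hQdef]; linarith
      · rw [hlog]; simp only [hQdef]; exact lt_add_one _
    obtain ⟨F, hFsub, hFcov, hFcard⟩ := coverN_lt_extract hcN'
    obtain ⟨Wj, hWs, hWc, hWcov⟩ := net_of_near (hrpos k) (himg k hkK) hFcov
    refine ⟨Wj, hWs, hWcov, ?_⟩
    have hQ0 : (0:ℝ) ≤ Q k := le_trans zero_le_one (hQ1 k)
    have hF : (F.card : ℝ) ≤ Q k := by
      have := ENNReal.toReal_le_of_le_ofReal hQ0 hFcard.le
      simpa using this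
    have : (Wj.card : ℝ) ≤ (F.card : ℝ) := Nat.cast_le.2 hWc
    linarith
  choose W hW1 hW2 hW3 using hWex
  -- the recursive finite sets E j
  set E : ℕ → Finset V := fun j => Nat.rec (W 0) (fun j Ej => Ej.image (S τ) ∪ W (j+1)) j
    with hEdef
  have hE0 : E 0 = W 0 := rfl
  have hEsucc : ∀ j, E (j+1) = (E j).image (S τ) ∪ W (j+1) := fun j => rfl
  have hEW : ∀ j, W j ⊆ E j := by
    intro j; cases j with
    | zero => exact fun _ h => h
    | succ j => rw [hEsucc]; exact Finset.subset_union_right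
  have hE1 : ∀ j, ↑(E j) ⊆ S (((K+j:ℕ):ℝ) * τ) '' B₁ := by
    intro j; induction j with
    | zero => exact hW1 0
    | succ j ih =>
        rw [hEsucc]
        intro x hx
        rcases Finset.mem_union.1 (Finset.mem_coe.1 hx) with hx' | hx'
        · obtain ⟨y, hy, rfl⟩ := Finset.mem_image.1 hx'
          obtain ⟨b, hb, rfl⟩ := ih (Finset.mem_coe.2 hy)
          refine ⟨b, hb, ?_⟩
          rw [hS.2 τ (((K+j:ℕ):ℝ) * τ) hτ.le (by positivity)]
          congr 1
          push_cast
          ring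
        · exact hW1 (j+1) (Finset.mem_coe.2 hx')
  have hE2 : ∀ j, S (((K+j:ℕ):ℝ) * τ) '' B₁ ⊆ ⋃ w ∈ E j, ball w (6 * r (K+j)) := by
    intro j
    refine (hW2 j).trans ?_
    exact iUnion₂_mono' fun w hw => ⟨w, hEW j hw, le_rfl⟩
  have hE3 : ∀ j x, x ∈ E j → S τ x ∈ E (j+1) := by
    intro j x hx
    rw [hEsucc]
    exact Finset.mem_union_left _ (Finset.mem_image_of_mem _ hx)
  have hEcard : ∀ j, ((E j).card : ℝ) ≤ (j+1) * Q (K+j) := by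
    intro j; induction j with
    | zero => simpa [hE0] using hW3 0
    | succ j ih =>
        have hstep : ((E (j+1)).card : ℝ) ≤ ((E j).card : ℝ) + Q (K+(j+1)) := by
          rw [hEsucc]
          have hc1 : ((E j).image (S τ) ∪ W (j+1)).card ≤
              ((E j).image (S τ)).card + (W (j+1)).card := Finset.card_union_le _ _
          have hc2 := Finset.card_image_le (s := E j) (f := S τ)
          have h3 := hW3 (j+1)
          have hc3 : (((E j).image (S τ) ∪ W (j+1)).card : ℝ) ≤
              ((E j).card : ℝ) + ((W (j+1)).card : ℝ) := by
            exact_mod_cast le_trans hc1 (Nat.add_le_add_right hc2 _)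
          linarith
        have hq := hQmono (show K+j ≤ K+(j+1) by omega)
        have hq1 := hQ1 (K+(j+1))
        have hj1 : (0:ℝ) ≤ (j:ℝ)+1 := by positivity
        push_cast
        push_cast at ih
        nlinarith [mul_le_mul_of_nonneg_left hq hj1]
  -- the candidate attractor
  set U : Set V := ⋃ j, (E j : Set V) with hUdef
  set M : Set V := closure U with hMdef
  have hUM : U ⊆ M := subset_closure
  have hUne : U.Nonempty := by
    have hGne : (S (((K+0:ℕ):ℝ) * τ) '' B₁).Nonempty := hB₁ne.image _
    obtain ⟨x, hx⟩ := hGne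
    obtain ⟨w, hw, -⟩ := mem_iUnion₂.1 (hW2 0 hx)
    exact ⟨w, mem_iUnion.2 ⟨0, hEW 0 hw⟩⟩
  have hMne : M.Nonempty := hUne.mono hUM
  -- tail estimates for points of U
  have htail : ∀ j, ∀ x ∈ (E j : Set V), EMetric.infEdist x M₀ ≤ ENNReal.ofReal (r (K+j)) :=
    fun j x hx => le_trans (le_attrDist (hE1 j hx)) (himg (K+j) (Nat.le_add_right _ _))
  have hMcomp : IsCompact M := by
    refine TotallyBounded.isCompact_of_isClosed ?_ isClosed_closure
    refine TotallyBounded.closure ?_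
    rw [Metric.totallyBounded_iff]
    intro ε hε
    obtain ⟨J, hJ⟩ := (hr0.eventually_lt_const (show (0:ℝ) < ε/4 by linarith)).exists_forall_of_atTop
    obtain ⟨F₀, hF₀1, hF₀2⟩ := h2.elim_nhds_subcover (fun x => ball x (ε/2))
      (fun x _ => ball_mem_nhds x (by linarith))
    refine ⟨(↑((Finset.range (J+1)).biUnion E) : Set V) ∪ ↑F₀,
      (Finset.finite_toSet _).union (Finset.finite_toSet _), ?_⟩
    intro x hx
    obtain ⟨j, hj⟩ := mem_iUnion.1 hx
    by_cases hjJ : j ≤ J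
    · refine mem_iUnion₂.2 ⟨x, ?_, mem_ball_self hε⟩
      exact Or.inl (Finset.mem_coe.2 (Finset.mem_biUnion.2
        ⟨j, Finset.mem_range.2 (by omega), Finset.mem_coe.1 hj⟩))
    · obtain ⟨m, hm, hdm⟩ := near_point (hrpos (K+j)) (htail j x hj)
      obtain ⟨c, hc, hmc⟩ := mem_iUnion₂.1 (hF₀2 hm)
      refine mem_iUnion₂.2 ⟨c, Or.inr hc, mem_ball.2 ?_⟩
      have h1 : r (K+j) ≤ r j := hrmono (by omega)
      have h2 : r j < ε/4 := hJ j (by omega)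
      have h3 : dist m c < ε/2 := mem_ball.1 hmc
      have := dist_triangle x m c
      linarith
  have hMinv : S τ '' M ⊆ M := by
    rintro _ ⟨x, hx, rfl⟩
    by_cases hxE : ∃ j, x ∈ (E j : Set V)
    · obtain ⟨j, hj⟩ := hxE
      exact hUM (mem_iUnion.2 ⟨j+1, hE3 j x hj⟩)
    · -- x is a limit of points from arbitrarily late E j's
      have hcl : ∀ m : ℕ, x ∈ closure (⋃ j, ⋃ (_ : m ≤ j), (E j : Set V)) := by
        intro m
        have hsplit : U ⊆ (↑((Finset.range m).biUnion E) : Set V) ∪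
            (⋃ j, ⋃ (_ : m ≤ j), (E j : Set V)) := by
          intro y hy
          obtain ⟨j, hj⟩ := mem_iUnion.1 hy
          by_cases h : j < m
          · exact Or.inl (Finset.mem_coe.2 (Finset.mem_biUnion.2
              ⟨j, Finset.mem_range.2 h, Finset.mem_coe.1 hj⟩))
          · exact Or.inr (mem_iUnion₂.2 ⟨j, by omega, hj⟩)
        have hx2 := closure_mono hsplit hx
        rw [closure_union] at hx2
        rcases hx2 with h | h
        · rw [IsClosed.closure_eq (Finset.finite_toSet _).isClosed] at h
          obtain ⟨j, -, hj⟩ := Finset.mem_biUnion.1 (Finset.mem_coe.1 h)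
          exact absurd ⟨j, Finset.mem_coe.2 hj⟩ hxE
        · exact h
      have key : ∀ m : ℕ, ∃ j : ℕ, ∃ a : V, m ≤ j ∧ a ∈ B₁ ∧
          S (((K+j:ℕ):ℝ) * τ) a ∈ (E j : Set V) ∧
          dist x (S (((K+j:ℕ):ℝ) * τ) a) < 1/(m+1) := by
        intro m
        obtain ⟨b, hb, hdb⟩ := Metric.mem_closure_iff.1 (hcl m) (1/(m+1)) (by positivity)
        obtain ⟨j, hj, hbj⟩ := mem_iUnion₂.1 hb
        obtain ⟨a, ha, rfl⟩ := hE1 j hbj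
        exact ⟨j, a, hj, ha, hbj, hdb⟩
      choose jf af hjf haf hamem hadist using key
      set tk : ℕ → ℝ := fun m => ((K + jf m : ℕ) : ℝ) * τ with htkdef
      have htk0 : ∀ m, 0 ≤ tk m := fun m => by positivity
      have htkge : ∀ m : ℕ, (m:ℝ) * τ ≤ tk m := by
        intro m
        have h1 : (m:ℝ) ≤ ((K + jf m : ℕ) : ℝ) := Nat.cast_le.2 (le_trans (hjf m) (by omega))
        exact mul_le_mul_of_nonneg_right h1 hτ.le
      have htktop : Tendsto tk atTop atTop :=
        tendsto_atTop_mono htkge (tendsto_natCast_atTop_atTop.atTop_mul_const hτ)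
      have hwtend : Tendsto (fun m => S (tk m) (af m)) atTop (𝓝 x) := by
        rw [tendsto_iff_dist_tendsto_zero]
        refine squeeze_zero (fun m => dist_nonneg) (fun m => ?_)
          tendsto_one_div_add_atTop_nhds_zero_nat
        rw [dist_comm]; exact (hadist m).le
      have hyimg : ∀ m, S (τ + tk m) (af m) ∈ S (((K + (jf m + 1) : ℕ):ℝ) * τ) '' B₁ := by
        intro m
        refine ⟨af m, haf m, ?_⟩
        have harg : ((K + (jf m + 1) : ℕ):ℝ) * τ = τ + tk m := by
          rw [htkdef]; push_cast; ring
        rw [harg]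
      have hynear : ∀ m, EMetric.infEdist (S (τ + tk m) (af m)) M₀ ≤
          ENNReal.ofReal (r (K + (jf m + 1))) := fun m =>
        le_trans (le_attrDist (hyimg m)) (himg (K + (jf m + 1)) (Nat.le_add_right _ _))
      have hynet : ∀ m, ∃ w, w ∈ (E (jf m + 1) : Set V) ∧
          dist (S (τ + tk m) (af m)) w < 6 * r (K + (jf m + 1)) := by
        intro m
        obtain ⟨w, hw, hwb⟩ := mem_iUnion₂.1 (hE2 (jf m + 1) (hyimg m))
        exact ⟨w, hw, mem_ball.1 hwb⟩
      have hp : ∀ m, ∃ p ∈ M₀, dist (S (τ + tk m) (af m)) p < 2 * r (K + (jf m + 1)) :=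
        fun m => near_point (hrpos _) (hynear m)
      choose p hpM hpd using hp
      obtain ⟨z, hzM, φ, hφ, hφtend⟩ := h2.tendsto_subseq hpM
      have hidx : ∀ m : ℕ, m ≤ K + (jf (φ m) + 1) := by
        intro m
        have := hφ.le_apply (x := m)
        have := hjf (φ m)
        omega
      have hrφ : ∀ m, r (K + (jf (φ m) + 1)) ≤ r m := fun m => hrmono (hidx m)
      have hr2 : Tendsto (fun m : ℕ => 2 * r m) atTop (𝓝 0) := by
        simpa using hr0.const_mul (2:ℝ)
      have hr6 : Tendsto (fun m : ℕ => 6 * r m) atTop (𝓝 0) := by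
        simpa using hr0.const_mul (6:ℝ)
      have hytend : Tendsto (fun m => S (τ + tk (φ m)) (af (φ m))) atTop (𝓝 z) := by
        rw [tendsto_iff_dist_tendsto_zero]
        refine squeeze_zero (fun m => dist_nonneg) (fun m => ?_)
          ((hr2.add (tendsto_iff_dist_tendsto_zero.1 hφtend)) |>.mono_right (by simp))
        calc dist (S (τ + tk (φ m)) (af (φ m))) z ≤
            dist (S (τ + tk (φ m)) (af (φ m))) (p (φ m)) + dist (p (φ m)) z :=
              dist_triangle _ _ _
        _ ≤ 2 * r m + dist ((p ∘ φ) m) z := by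
              have h1 := (hpd (φ m)).le
              have h2 := hrφ m
              simp only [Function.comp_apply]
              have : (0:ℝ) ≤ 2 := by norm_num
              nlinarith
      have hzeq : S τ x = z := by
        refine hac τ hτ.le (fun m => tk (φ m)) (fun m => htk0 _)
          (htktop.comp hφ.tendsto_atTop) (fun m => af (φ m)) ?_ x z
          (hwtend.comp hφ.tendsto_atTop) hytend
        refine hB₁b.subset ?_
        rintro _ ⟨m, rfl⟩
        exact haf _
      rw [hzeq, hMdef, Metric.mem_closure_iff]
      intro ε hε
      have hev1 := (tendsto_iff_dist_tendsto_zero.1 hytend).eventually_lt_const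
        (show (0:ℝ) < ε/2 by linarith)
      have h6φ : Tendsto (fun m => 6 * r (K + (jf (φ m) + 1))) atTop (𝓝 0) := by
        refine squeeze_zero (fun m => by positivity) (fun m => ?_) hr6
        have := hrφ m; linarith
      have hev2 := h6φ.eventually_lt_const (show (0:ℝ) < ε/2 by linarith)
      obtain ⟨m, h1m, h2m⟩ := (hev1.and hev2).exists
      obtain ⟨w, hw, hwd⟩ := hynet (φ m)
      refine ⟨w, mem_iUnion.2 ⟨jf (φ m) + 1, hw⟩, ?_⟩
      calc dist z w ≤ dist z (S (τ + tk (φ m)) (af (φ m))) +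
          dist (S (τ + tk (φ m)) (af (φ m))) w := dist_triangle _ _ _
      _ < ε/2 + ε/2 := by
          rw [dist_comm]
          exact add_lt_add (lt_of_le_of_lt le_rfl h1m) (lt_trans hwd h2m)
      _ = ε := by ring
  have hcovM : ∀ ε : ℝ, 0 < ε → ∀ J : ℕ, 18 * r (K + J) ≤ ε →
      coverN M ε ≤ ENNReal.ofReal (((J:ℝ)+1) * (((J:ℝ)+1) * Q (K+J)) + Q (K+J)) := by
    intro ε hε J hJε
    set ρ := r (K + J) with hρ
    have hρpos : 0 < ρ := hrpos _
    have h1r : 1 / ρ = Real.exp (ξ * ((K+J:ℕ) * τ)) := by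
      rw [hρ, hrdef]; simp [Real.exp_neg, one_div]
    have hlog : Real.log (1 / ρ) = ξ * ((K+J:ℕ) * τ) := by rw [h1r, Real.log_exp]
    have hcN' : coverN M₀ ρ < ENNReal.ofReal (Q (K+J)) := by
      refine lt_of_le_of_lt (hnet ρ hρpos (hKε₀ (K+J) (Nat.le_add_right _ _)))
        ((ENNReal.ofReal_lt_ofReal_iff ?_).2 ?_)
      · have := Real.exp_pos (d * (ξ * ((K+J:ℕ) * τ))); simp only [hQdef]; linarith
      · rw [hlog]; simp only [hQdef]; exact lt_add_one _
    obtain ⟨F₀, hF₀sub, hF₀cov, hF₀card⟩ := coverN_lt_extract hcN'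
    set C : Finset V := (Finset.range (J+1)).biUnion E ∪ F₀ with hC
    have hUcov : U ⊆ ⋃ c ∈ C, ball c (3 * ρ) := by
      intro x hx
      obtain ⟨j, hj⟩ := mem_iUnion.1 hx
      by_cases hjJ : j ≤ J
      · refine mem_iUnion₂.2 ⟨x, ?_, mem_ball_self (by positivity)⟩
        exact Finset.mem_union_left _ (Finset.mem_biUnion.2
          ⟨j, Finset.mem_range.2 (by omega), Finset.mem_coe.1 hj⟩)
      · obtain ⟨m, hm, hdm⟩ := near_point (hrpos (K+j)) (htail j x hj)
        obtain ⟨c, hc, hmc⟩ := mem_iUnion₂.1 (hF₀cov hm)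
        refine mem_iUnion₂.2 ⟨c, Finset.mem_union_right _ hc, mem_ball.2 ?_⟩
        have h1 : r (K+j) ≤ ρ := hrmono (by omega)
        have h3 : dist m c < ρ := mem_ball.1 hmc
        have := dist_triangle x m c
        linarith
    obtain ⟨C', hC'sub, hC'card, hC'cov⟩ := recenter (by positivity) hUcov
    have hMcov : M ⊆ ⋃ c ∈ C', ball c ε := by
      have hcls : IsClosed (⋃ c ∈ C', closedBall c (2*(3*ρ))) :=
        isClosed_biUnion_finset fun c _ => Metric.isClosed_closedBall
      have hU2 : U ⊆ ⋃ c ∈ C', closedBall c (2*(3*ρ)) :=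
        subset_trans hC'cov (iUnion₂_mono fun c _ => ball_subset_closedBall)
      refine subset_trans (closure_minimal hU2 hcls)
        (iUnion₂_mono fun c _ => closedBall_subset_ball ?_)
      linarith
    have hC'M : ↑C' ⊆ M := subset_trans hC'sub hUM
    refine le_trans (coverN_le_card hC'M hMcov) ?_
    have h2 : C.card ≤ ((Finset.range (J+1)).biUnion E).card + F₀.card :=
      Finset.card_union_le _ _
    have h3 : ((Finset.range (J+1)).biUnion E).card ≤
        ∑ j ∈ Finset.range (J+1), (E j).card := Finset.card_biUnion_le
    have h4 : ((∑ j ∈ Finset.range (J+1), (E j).card : ℕ) : ℝ) ≤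
        ((J:ℝ)+1) * (((J:ℝ)+1) * Q (K+J)) := by
      push_cast
      have hterm : ∀ j ∈ Finset.range (J+1), ((E j).card : ℝ) ≤ ((J:ℝ)+1) * Q (K+J) := by
        intro j hjm
        have hjJ : j ≤ J := by
          have := Finset.mem_range.1 hjm; omega
        refine le_trans (hEcard j) ?_
        have hq := hQmono (show K+j ≤ K+J by omega)
        have hcast : ((j:ℝ)+1) ≤ (J:ℝ)+1 := by
          have : (j:ℝ) ≤ J := Nat.cast_le.2 hjJ; linarith
        nlinarith [hQ1 (K+j), Nat.cast_nonneg (α := ℝ) j]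
      calc (∑ j ∈ Finset.range (J+1), ((E j).card:ℝ))
          ≤ ∑ _j ∈ Finset.range (J+1), ((J:ℝ)+1) * Q (K+J) := Finset.sum_le_sum hterm
      _ = ((J:ℝ)+1) * (((J:ℝ)+1) * Q (K+J)) := by
          rw [Finset.sum_const, Finset.card_range]
          push_cast; ring
    have h5 : (F₀.card : ℝ) ≤ Q (K+J) := by
      have := ENNReal.toReal_le_of_le_ofReal (le_trans zero_le_one (hQ1 _)) hF₀card.le
      simpa using this
    have h2' : (C.card : ℝ) ≤ (((Finset.range (J+1)).biUnion E).card : ℝ) + (F₀.card : ℝ) := by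
      exact_mod_cast h2
    have h3' : (((Finset.range (J+1)).biUnion E).card : ℝ) ≤
        ((∑ j ∈ Finset.range (J+1), (E j).card : ℕ) : ℝ) := by exact_mod_cast h3
    have h1' : (C'.card : ℝ) ≤ (C.card : ℝ) := Nat.cast_le.2 hC'card
    calc (C'.card : ℝ≥0∞) = ENNReal.ofReal (C'.card : ℝ) := (ENNReal.ofReal_natCast _).symm
    _ ≤ _ := ENNReal.ofReal_le_ofReal (by linarith)
  have hMdim : fracDim M ≠ ⊤ := by
    set c : ℝ := ξ * τ with hcdef
    have hc : 0 < c := mul_pos hξ hτ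
    set c₁ : ℝ := 2 + d * c with hc₁def
    have hc₁ : 0 < c₁ := by nlinarith
    set c₀ : ℝ := 2 * Real.log 2 + d * (ξ * ((K:ℝ) * τ)) with hc₀def
    set c₂ : ℝ := c₀ + c₁ + c₁ * Real.log 18 / c with hc₂def
    set c₃ : ℝ := c₁ / c with hc₃def
    set D : ℝ := c₃ + 1 with hDdef
    set ε₂ : ℝ := min 1 (Real.exp (-(max 1 c₂))) with hε₂def
    have hε₂pos : 0 < ε₂ := lt_min one_pos (Real.exp_pos _)
    have hle : fracDim M ≤ ENNReal.ofReal D := by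
      unfold fracDim
      refine Filter.limsup_le_of_le (by isBoundedDefault) ?_
      refine Filter.eventually_of_mem (Ioo_mem_nhdsGT hε₂pos) ?_
      rintro ε ⟨hε, hεlt⟩
      have hε1 : ε < 1 := lt_of_lt_of_le hεlt (min_le_left _ _)
      set L : ℝ := Real.log (1/ε) with hLdef
      have hεexp : ε < Real.exp (-(max 1 c₂)) := lt_of_lt_of_le hεlt (min_le_right _ _)
      have hL : max 1 c₂ < L := by
        rw [hLdef, one_div, Real.log_inv]
        have h' := Real.log_lt_log hε hεexp
        rw [Real.log_exp] at h'
        linarith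
      have hL1 : 1 ≤ L := le_trans (le_max_left _ _) hL.le
      have hL0 : 0 < L := lt_of_lt_of_le zero_lt_one hL1
      have hLc₂ : c₂ ≤ L := le_trans (le_max_right _ _) hL.le
      have hlog18 : Real.log (18/ε) = Real.log 18 + L := by
        rw [Real.log_div (by norm_num) (ne_of_gt hε), hLdef, one_div, Real.log_inv]; ring
      have hlog18pos : 0 < Real.log (18/ε) := by
        rw [hlog18]
        have : 0 ≤ Real.log 18 := Real.log_nonneg (by norm_num)
        linarith
      set J : ℕ := ⌈Real.log (18/ε) / c⌉₊ with hJdef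
      have hJub : (J:ℝ) < Real.log (18/ε) / c + 1 := Nat.ceil_lt_add_one (by positivity)
      have hJlb : Real.log (18/ε) ≤ (J:ℝ) * c := by
        rw [← div_le_iff₀ hc]
        exact Nat.le_ceil _
      have hcover : 18 * r (K+J) ≤ ε := by
        have h1 : r (K+J) ≤ Real.exp (-((J:ℝ) * c)) := by
          rw [hrdef]
          apply Real.exp_le_exp.2
          push_cast
          rw [hcdef]
          nlinarith [Nat.cast_nonneg (α := ℝ) K, Nat.cast_nonneg (α := ℝ) J, hξ.le, hτ.le]
        have h2 : Real.exp (-((J:ℝ) * c)) ≤ ε / 18 := by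
          rw [show ε/18 = (18/ε)⁻¹ by field_simp]
          rw [← Real.exp_log (show (0:ℝ) < (18/ε)⁻¹ by positivity)]
          apply Real.exp_le_exp.2
          rw [Real.log_inv]
          linarith
        linarith [hrpos (K+J)]
      have hP := hcovM ε hε J hcover
      set P : ℝ := ((J:ℝ)+1) * (((J:ℝ)+1) * Q (K+J)) + Q (K+J) with hPdef
      have hQKJ : 1 ≤ Q (K+J) := hQ1 _
      have hJ0 : (0:ℝ) ≤ (J:ℝ) := Nat.cast_nonneg _
      have hP1 : 1 ≤ P := by
        rw [hPdef]
        nlinarith [mul_nonneg (show (0:ℝ) ≤ (J:ℝ)+1 by linarith)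
          (mul_nonneg (show (0:ℝ) ≤ (J:ℝ)+1 by linarith) (show (0:ℝ) ≤ Q (K+J) by linarith))]
      have hNtop : coverN M ε ≠ ⊤ := ne_top_of_le_ne_top ENNReal.ofReal_ne_top hP
      have hNle : (coverN M ε).toReal ≤ P := ENNReal.toReal_le_of_le_ofReal (by linarith) hP
      have hN1 : 1 ≤ (coverN M ε).toReal := by
        have h' := one_le_coverN (G := M) hMne (ε := ε)
        simpa using ENNReal.toReal_mono hNtop h'
      have hQlog : Real.log (Q (K+J)) ≤ Real.log 2 + d * (ξ * ((K:ℝ) * τ)) + d * c * (J:ℝ) := by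
        have ha : 0 ≤ d * (ξ * (((K+J:ℕ):ℝ) * τ)) := by positivity
        have hq1 : Q (K+J) ≤ 2 * Real.exp (d * (ξ * (((K+J:ℕ):ℝ) * τ))) := by
          simp only [hQdef]
          have := Real.one_le_exp ha
          linarith
        have hq2 : Real.log (Q (K+J)) ≤ Real.log 2 + d * (ξ * (((K+J:ℕ):ℝ) * τ)) := by
          calc Real.log (Q (K+J)) ≤ Real.log (2 * Real.exp (d * (ξ * (((K+J:ℕ):ℝ) * τ)))) :=
                Real.log_le_log (by linarith) hq1
          _ = Real.log 2 + d * (ξ * (((K+J:ℕ):ℝ) * τ)) := by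
                rw [Real.log_mul (by norm_num) (ne_of_gt (Real.exp_pos _)), Real.log_exp]
        have hexpand : d * (ξ * (((K+J:ℕ):ℝ) * τ)) =
            d * (ξ * ((K:ℝ) * τ)) + d * c * (J:ℝ) := by
          rw [hcdef]; push_cast; ring
        linarith [hq2, hexpand.le, hexpand.ge]
      have hPfac : P ≤ 2 * (((J:ℝ)+1)^2 * Q (K+J)) := by
        rw [hPdef]
        nlinarith [mul_nonneg (mul_nonneg hJ0 hJ0) (show (0:ℝ) ≤ Q (K+J) by linarith),
          mul_nonneg hJ0 (show (0:ℝ) ≤ Q (K+J) by linarith)]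
      have hlogJ : Real.log ((J:ℝ)+1) ≤ (J:ℝ) := by
        have := Real.log_le_sub_one_of_pos (show (0:ℝ) < (J:ℝ)+1 by positivity)
        linarith
      have hlogP : Real.log P ≤ c₀ + c₁ * (J:ℝ) := by
        have h1 : Real.log P ≤ Real.log (2 * (((J:ℝ)+1)^2 * Q (K+J))) :=
          Real.log_le_log (by linarith) hPfac
        rw [Real.log_mul (by norm_num) (by positivity),
          Real.log_mul (by positivity) (by linarith), Real.log_pow] at h1
        push_cast at h1
        rw [hc₀def, hc₁def]
        linarith [hQlog, hlogJ]
      have hJL : (J:ℝ) ≤ (Real.log 18 + L)/c + 1 := by rw [← hlog18]; linarith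
      have hfinal : Real.log (coverN M ε).toReal / L ≤ D := by
        rw [div_le_iff₀ hL0]
        have h1 : Real.log (coverN M ε).toReal ≤ Real.log P := Real.log_le_log (by linarith) hNle
        have h2 : c₁ * (J:ℝ) ≤ c₁ * ((Real.log 18 + L)/c + 1) :=
          mul_le_mul_of_nonneg_left hJL hc₁.le
        have h3 : c₀ + c₁ * ((Real.log 18 + L)/c + 1) = c₂ + c₃ * L := by
          rw [hc₂def, hc₃def]; field_simp; ring
        have h4 : Real.log (coverN M ε).toReal ≤ c₂ + c₃ * L := by
          calc Real.log (coverN M ε).toReal ≤ c₀ + c₁ * (J:ℝ) := le_trans h1 hlogP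
          _ ≤ c₀ + c₁ * ((Real.log 18 + L)/c + 1) := by linarith
          _ = c₂ + c₃ * L := h3
        calc Real.log (coverN M ε).toReal ≤ c₂ + c₃ * L := h4
        _ ≤ L + c₃ * L := by linarith
        _ = D * L := by rw [hDdef]; ring
      simp only [if_neg hNtop]
      exact ENNReal.ofReal_le_ofReal hfinal
    exact ne_top_of_le_ne_top ENNReal.ofReal_ne_top hle
  have hMattr : ExpAttractsAt S M (ξ/2) := by
    intro G hG
    obtain ⟨s₀, hs₀0, hs₀⟩ := habs G hG
    have hbd : ∀ t : ℝ, s₀ + ((K:ℝ)+1) * τ + 1 ≤ t →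
        ENNReal.ofReal (Real.exp (ξ/2 * t)) * attrDist (S t '' G) M ≤
        ENNReal.ofReal (6 * Real.exp (ξ * (s₀ + τ)) * Real.exp (-(ξ/2) * t)) := by
      intro t ht
      have hKτ0 : (0:ℝ) ≤ ((K:ℝ)+1) * τ := by positivity
      have hts₀ : s₀ ≤ t := by linarith
      set k : ℕ := ⌊(t - s₀)/τ⌋₊ with hkdef
      have hfl : (k:ℝ) ≤ (t - s₀)/τ := Nat.floor_le (div_nonneg (by linarith) hτ.le)
      have hfl2 : (t - s₀)/τ < (k:ℝ) + 1 := Nat.lt_floor_add_one _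
      have hkK : K ≤ k := by
        have : ((K:ℕ):ℝ) ≤ (t - s₀)/τ := by
          rw [le_div_iff₀ hτ]
          linarith
        exact_mod_cast Nat.le_floor this
      have hkτ : (k:ℝ) * τ ≤ t - s₀ := by
        rw [← le_div_iff₀ hτ]; exact hfl
      have hkτ2 : t - s₀ - τ < (k:ℝ) * τ := by
        have := (div_lt_iff₀ hτ).1 hfl2
        linarith
      set s : ℝ := t - (k:ℝ) * τ with hsdef
      have hss₀ : s₀ ≤ s := by rw [hsdef]; linarith
      have hincl : S t '' G ⊆ S ((k:ℝ) * τ) '' B₁ := by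
        rintro _ ⟨g, hg, rfl⟩
        refine ⟨S s g, hs₀ s hss₀ ⟨g, hg, rfl⟩, ?_⟩
        rw [hS.2 ((k:ℝ)*τ) s (by positivity) (le_trans hs₀0 hss₀)]
        congr 1
        rw [hsdef]; ring
      set j : ℕ := k - K with hjdef
      have hkj : k = K + j := by omega
      have hcov := hE2 j
      rw [← hkj] at hcov
      have hattr : attrDist (S t '' G) M ≤ ENNReal.ofReal (6 * r k) := by
        rw [attrDist_le_iff]
        intro y hy
        obtain ⟨w, hw, hwb⟩ := mem_iUnion₂.1 (hcov (hincl hy))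
        have hwM : w ∈ M := hUM (mem_iUnion.2 ⟨j, hw⟩)
        calc EMetric.infEdist y M ≤ edist y w := EMetric.infEdist_le_edist_of_mem hwM
        _ ≤ ENNReal.ofReal (6 * r k) := (edist_lt_ofReal.2 (mem_ball.1 hwb)).le
      calc ENNReal.ofReal (Real.exp (ξ/2 * t)) * attrDist (S t '' G) M
          ≤ ENNReal.ofReal (Real.exp (ξ/2 * t)) * ENNReal.ofReal (6 * r k) :=
            mul_le_mul_right hattr _
      _ = ENNReal.ofReal (Real.exp (ξ/2 * t) * (6 * r k)) := by
            rw [← ENNReal.ofReal_mul (Real.exp_pos _).le]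
      _ ≤ ENNReal.ofReal (6 * Real.exp (ξ * (s₀ + τ)) * Real.exp (-(ξ/2) * t)) := by
            apply ENNReal.ofReal_le_ofReal
            have hrk : r k ≤ Real.exp (-(ξ * (t - s₀ - τ))) := by
              rw [hrdef]
              apply Real.exp_le_exp.2
              nlinarith
            have hkey : Real.exp (ξ/2*t) * Real.exp (-(ξ*(t-s₀-τ))) =
                Real.exp (ξ*(s₀+τ)) * Real.exp (-(ξ/2)*t) := by
              rw [← Real.exp_add, ← Real.exp_add]; congr 1; ring
            have hexp1 : (0:ℝ) < Real.exp (ξ/2*t) := Real.exp_pos _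
            calc Real.exp (ξ/2*t) * (6 * r k)
                ≤ Real.exp (ξ/2*t) * (6 * Real.exp (-(ξ*(t-s₀-τ)))) := by nlinarith
            _ = 6 * Real.exp (ξ*(s₀+τ)) * Real.exp (-(ξ/2)*t) := by
                  linear_combination 6 * hkey
    have hg0 : Tendsto (fun t : ℝ =>
        ENNReal.ofReal (6 * Real.exp (ξ * (s₀ + τ)) * Real.exp (-(ξ/2) * t))) atTop (𝓝 0) := by
      have h1 : Tendsto (fun t : ℝ => -(ξ/2) * t) atTop atBot := by
        apply Filter.Tendsto.const_mul_atTop_of_neg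
        · linarith
        · exact tendsto_id
      have h2 : Tendsto (fun t : ℝ => Real.exp (-(ξ/2) * t)) atTop (𝓝 0) :=
        Real.tendsto_exp_atBot.comp h1
      have h3 : Tendsto (fun t : ℝ => 6 * Real.exp (ξ * (s₀ + τ)) * Real.exp (-(ξ/2) * t))
          atTop (𝓝 0) := by
        have := h2.const_mul (6 * Real.exp (ξ * (s₀ + τ)))
        simpa using this
      have := ENNReal.tendsto_ofReal h3
      simpa using this
    refine tendsto_of_tendsto_of_tendsto_of_le_of_le' tendsto_const_nhds hg0
      (Filter.Eventually.of_forall fun t => zero_le) ?_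
    filter_upwards [eventually_ge_atTop (s₀ + ((K:ℝ)+1) * τ + 1)] with t ht
    exact hbd t ht
  exact ⟨M, hMne, hMcomp, hMinv, hMdim, ξ/2, half_pos hξ, hMattr⟩

theorem Tdiscrete_exponential_attractor_small_time_step
    [CompleteSpace V] (S : ℝ → V → V) (hS : IsSemiflow S) (hac : AsympClosed S)
    (T : ℝ) (hT : 0 < T) (N : ℕ) (hN : 0 < N) :
    (∃ M₀ : Set V, IsDiscExpAttr S T M₀) ↔
    (∃ M₀ : Set V, IsDiscExpAttr S (T / N) M₀) := by
  have hTN : 0 < T / (N:ℝ) := div_pos hT (by exact_mod_cast hN)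
  constructor
  · rintro ⟨M₀, h1, h2, -, h4, ξ, hξ, h5⟩
    exact exists_attr S hS hac M₀ h1 h2 h4 ξ hξ h5 (T/N) hTN
  · rintro ⟨M₀, h1, h2, -, h4, ξ, hξ, h5⟩
    exact exists_attr S hS hac M₀ h1 h2 h4 ξ hξ h5 T hT

end Statement4
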